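/- Let M be a multiplication R-module with ann(M) a prime ideal of R, not simple. If the Golomb space G(M) on M \ {0} is a T₀-space, then J(M) = 0. -/

import Mathlib

open Pointwise

section Aux

variable {R M : Type*} [CommRing R] [AddCommGroup M] [Module R M]

lemma ann_smul_top_eq_bot' :
    ((⊥ : Submodule R M).colon ⊤) • (⊤ : Submodule R M) = ⊥ := by
  rw [eq_bot_iff]
  refine Submodule.smul_le.mpr fun r hr n _ => ?_
  exact Submodule.mem_colon.mp hr n trivial

lemma torsionfree'
    (hmul : ∀ N : Submodule R M, ∃ I : Ideal R, N = I • (⊤ : Submodule R M))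
    (hp : ((⊥ : Submodule R M).colon ⊤).IsPrime)
    {r : R} (hr : r ∉ (⊥ : Submodule R M).colon ⊤) {m : M} (hm : m ≠ 0) :
    r • m ≠ 0 := by
  intro h0
  obtain ⟨I, hI⟩ := hmul (Submodule.span R {m})
  have hIp : I ≤ (⊥ : Submodule R M).colon ⊤ := by
    intro s hs
    have hrs : r * s ∈ (⊥ : Submodule R M).colon ⊤ := by
      refine Submodule.mem_colon.mpr fun x _ => ?_
      have hsx : s • x ∈ Submodule.span R {m} := by
        rw [hI]; exact Submodule.smul_mem_smul hs trivial
      obtain ⟨c, hc⟩ := Submodule.mem_span_singleton.mp hsx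
      have hx : (r * s) • x = c • (r • m) := by
        rw [mul_smul, ← hc, smul_comm]
      rw [hx, h0, smul_zero]
      exact Submodule.zero_mem _
    rcases hp.mem_or_mem hrs with h | h
    · exact absurd h hr
    · exact h
  have hle : Submodule.span R {m} ≤ (⊥ : Submodule R M) := by
    rw [hI, ← ann_smul_top_eq_bot' (R := R) (M := M)]
    exact Submodule.smul_mono hIp le_rfl
  exact hm (by simpa using hle (Submodule.mem_span_singleton_self m))

lemma sup_ann_eq_top_of_smul_top' [Nontrivial M]
    (hmul : ∀ N : Submodule R M, ∃ I : Ideal R, N = I • (⊤ : Submodule R M))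
    (hp : ((⊥ : Submodule R M).colon ⊤).IsPrime)
    {I : Ideal R} (hI : I • (⊤ : Submodule R M) = ⊤) :
    I ⊔ (⊥ : Submodule R M).colon ⊤ = ⊤ := by
  by_contra hne
  obtain ⟨m, hm⟩ := exists_ne (0 : M)
  obtain ⟨K, hK⟩ := hmul (Submodule.span R {m})
  have key : Submodule.span R {m} = I • Submodule.span R {m} := by
    conv_lhs => rw [hK, ← hI]
    rw [← Submodule.smul_assoc, smul_eq_mul, mul_comm, ← smul_eq_mul,
      Submodule.smul_assoc, ← hK]
  have hm' : m ∈ I • Submodule.span R {m} :=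
    key ▸ Submodule.mem_span_singleton_self m
  obtain ⟨q, hq, hqm⟩ := Submodule.mem_smul_span_singleton.mp hm'
  have h1q : (1 - q) ∉ (⊥ : Submodule R M).colon ⊤ := by
    intro hmem
    apply hne
    rw [Ideal.eq_top_iff_one]
    have : (1 : R) = q + (1 - q) := by ring
    rw [this]
    exact Submodule.add_mem _ (Submodule.mem_sup_left hq)
      (Submodule.mem_sup_right hmem)
  refine torsionfree' hmul hp h1q hm ?_
  rw [sub_smul, one_smul, hqm, sub_self]

lemma coatom_smul_top' [Nontrivial M]
    (hmul : ∀ N : Submodule R M, ∃ I : Ideal R, N = I • (⊤ : Submodule R M))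
    (hp : ((⊥ : Submodule R M).colon ⊤).IsPrime)
    {Q : Ideal R} (hQ : Q.IsMaximal)
    (hpQ : (⊥ : Submodule R M).colon ⊤ ≤ Q) :
    IsCoatom (Q • (⊤ : Submodule R M)) := by
  constructor
  · intro h
    have := sup_ann_eq_top_of_smul_top' hmul hp h
    rw [sup_of_le_left hpQ] at this
    exact hQ.ne_top this
  · intro N' hlt
    obtain ⟨I', hI'⟩ := hmul N'
    by_cases hle : I' ≤ Q
    · exact absurd (hI' ▸ Submodule.smul_mono hle le_rfl) hlt.not_ge
    · have hQlt : Q < Q ⊔ I' := left_lt_sup.mpr hle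
      have hsup : Q ⊔ I' = ⊤ := hQ.out.2 _ hQlt
      have : (⊤ : Submodule R M) ≤ N' := by
        calc (⊤ : Submodule R M) = (Q ⊔ I') • ⊤ := by rw [hsup, Submodule.top_smul]
        _ = Q • ⊤ ⊔ I' • ⊤ := Submodule.sup_smul _ _ _
        _ ≤ N' := sup_le hlt.le (le_of_eq hI'.symm)
      exact top_le_iff.mp this

lemma le_coatom' [Nontrivial M]
    (hmul : ∀ N : Submodule R M, ∃ I : Ideal R, N = I • (⊤ : Submodule R M))
    (hp : ((⊥ : Submodule R M).colon ⊤).IsPrime)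
    {N : Submodule R M} (hN : N ≠ ⊤) :
    ∃ C : Submodule R M, IsCoatom C ∧ N ≤ C := by
  obtain ⟨I, hI⟩ := hmul N
  have hIp : I ⊔ (⊥ : Submodule R M).colon ⊤ ≠ ⊤ := by
    intro h
    apply hN
    have h2 : (I ⊔ (⊥ : Submodule R M).colon ⊤) • (⊤ : Submodule R M) = ⊤ := by
      rw [h, Submodule.top_smul]
    rwa [Submodule.sup_smul, ann_smul_top_eq_bot', sup_bot_eq, ← hI] at h2
  obtain ⟨Q, hQmax, hQ⟩ := Ideal.exists_le_maximal _ hIp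
  exact ⟨Q • ⊤, coatom_smul_top' hmul hp hQmax (le_trans le_sup_right hQ),
    hI ▸ Submodule.smul_mono (le_trans le_sup_left hQ) le_rfl⟩

lemma open_eq_univ' [Nontrivial M]
    (hmul : ∀ N : Submodule R M, ∃ I : Ideal R, N = I • (⊤ : Submodule R M))
    (hp : ((⊥ : Submodule R M).colon ⊤).IsPrime)
    {j : M} (hj0 : j ≠ 0)
    (hj : ∀ C : Submodule R M, IsCoatom C → j ∈ C)
    {V : Set M}
    (hV : TopologicalSpace.GenerateOpen {S | ∃ (x : M) (N : Submodule R M),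
      N ≠ ⊥ ∧ N ⊔ Submodule.span R {x} = ⊤ ∧ S = x +ᵥ (N : Set M)} V) :
    j ∈ V → V = Set.univ := by
  induction hV with
  | basic S hS =>
      intro hjV
      obtain ⟨x, N, hNbot, hNx, rfl⟩ := hS
      have hNtop : N = ⊤ := by
        by_contra hne
        obtain ⟨C, hC, hNC⟩ := le_coatom' hmul hp hne
        obtain ⟨n, hn, hxn⟩ := hjV
        have hxC : x ∈ C := by
          have h1 : j - n ∈ C := C.sub_mem (hj C hC) (hNC hn)
          have h2 : x = j - n := by
            have : x + n = j := hxn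
            rw [← this]; abel
          rwa [h2]
        have hle : N ⊔ Submodule.span R {x} ≤ C :=
          sup_le hNC (Submodule.span_le.mpr (by simpa using hxC))
        rw [hNx] at hle
        exact hC.1 (top_le_iff.mp hle)
      subst hNtop
      refine Set.eq_univ_of_forall fun y => ?_
      exact ⟨y - x, trivial, by simp⟩
  | univ => intro _; rfl
  | inter s t _ _ ihs iht =>
      intro hjV
      rw [ihs hjV.1, iht hjV.2, Set.univ_inter]
  | sUnion S _ ih =>
      intro hjV
      obtain ⟨t, ht, hjt⟩ := hjV
      exact Set.eq_univ_of_univ_subset ((ih t ht hjt) ▸ Set.subset_sUnion_of_mem ht)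

end Aux

/-- If `M` is a non-simple multiplication module with prime annihilator and the
Golomb space `G(M)` on `M \ {0}` is `T₀`, then `J(M) = 0`. -/
theorem jacobson_bot_of_golomb_t0
    {R M : Type*} [CommRing R] [AddCommGroup M] [Module R M] [Nontrivial M]
    (hmul : ∀ N : Submodule R M, ∃ I : Ideal R, N = I • (⊤ : Submodule R M))
    (hp : ((⊥ : Submodule R M).colon ⊤).IsPrime)
    (hns : ¬ IsSimpleModule R M) :
    letI B : Set (Set M) := {S | ∃ (x : M) (N : Submodule R M),
      N ≠ ⊥ ∧ N ⊔ Submodule.span R {x} = ⊤ ∧ S = x +ᵥ (N : Set M)}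
    letI t : TopologicalSpace M := TopologicalSpace.generateFrom B
    @T0Space {x : M // x ≠ 0} (t.induced Subtype.val) →
      sInf {P : Submodule R M | IsCoatom P} = ⊥ := by
  intro hT0
  by_contra hbot
  obtain ⟨j, hjmem, hj0⟩ := (Submodule.ne_bot_iff _).mp hbot
  have hjC : ∀ C : Submodule R M, IsCoatom C → j ∈ C :=
    fun C hC => Submodule.mem_sInf.mp hjmem C hC
  by_cases hex : ∃ j' ∈ sInf {P : Submodule R M | IsCoatom P}, j' ≠ 0 ∧ j' ≠ j
  · obtain ⟨j', hj'mem, hj'0, hne⟩ := hex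
    have hj'C : ∀ C : Submodule R M, IsCoatom C → j' ∈ C :=
      fun C hC => Submodule.mem_sInf.mp hj'mem C hC
    letI t : TopologicalSpace M := TopologicalSpace.generateFrom
      {S | ∃ (x : M) (N : Submodule R M),
        N ≠ ⊥ ∧ N ⊔ Submodule.span R {x} = ⊤ ∧ S = x +ᵥ (N : Set M)}
    letI ts : TopologicalSpace {x : M // x ≠ 0} := t.induced Subtype.val
    haveI hT0' : @T0Space {x : M // x ≠ 0} ts := hT0
    have hinsep : Inseparable (⟨j, hj0⟩ : {x : M // x ≠ 0}) ⟨j', hj'0⟩ := by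
      rw [inseparable_iff_forall_isOpen]
      intro s hs
      obtain ⟨V, hV, rfl⟩ := isOpen_induced_iff.mp hs
      have hV' : TopologicalSpace.GenerateOpen
          {S | ∃ (x : M) (N : Submodule R M),
            N ≠ ⊥ ∧ N ⊔ Submodule.span R {x} = ⊤ ∧ S = x +ᵥ (N : Set M)} V := hV
      constructor
      · intro h
        have := open_eq_univ' hmul hp hj0 hjC hV' h
        simp [Set.mem_preimage, this]
      · intro h
        have := open_eq_univ' hmul hp hj'0 hj'C hV' h
        simp [Set.mem_preimage, this]
    exact hne (Subtype.mk_eq_mk.mp hinsep.eq.symm)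
  · push_neg at hex
    apply hns
    haveI : Nontrivial (Submodule R M) := ⟨⊥, ⊤, fun h => hj0 (by
      have : j ∈ (⊥ : Submodule R M) := h ▸ Submodule.mem_top
      simpa using this)⟩
    refine IsSimpleModule.mk (toIsSimpleOrder := ⟨fun N => ?_⟩)
    obtain ⟨I, hI⟩ := hmul N
    by_cases hle : I ≤ (⊥ : Submodule R M).colon ⊤
    · left
      rw [hI, eq_bot_iff, ← ann_smul_top_eq_bot' (R := R) (M := M)]
      exact Submodule.smul_mono hle le_rfl
    · right
      obtain ⟨r, hrI, hrp⟩ := SetLike.not_le_iff_exists.mp hle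
      have hrj : r • j ∈ sInf {P : Submodule R M | IsCoatom P} :=
        Submodule.smul_mem _ r hjmem
      have hrj0 : r • j ≠ 0 := torsionfree' hmul hp hrp hj0
      have hrjj : r • j = j := hex _ hrj hrj0
      have h1r : (1 - r) ∈ (⊥ : Submodule R M).colon ⊤ := by
        by_contra h
        exact torsionfree' hmul hp h hj0 (by rw [sub_smul, one_smul, hrjj, sub_self])
      have hsup : I ⊔ (⊥ : Submodule R M).colon ⊤ = ⊤ := by
        rw [Ideal.eq_top_iff_one]
        have h1 : (1 : R) = r + (1 - r) := by ring
        rw [h1]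
        exact Submodule.add_mem _ (Submodule.mem_sup_left hrI)
          (Submodule.mem_sup_right h1r)
      have : (⊤ : Submodule R M) = I • ⊤ := by
        conv_lhs => rw [← Submodule.top_smul (⊤ : Submodule R M), ← hsup]
        rw [Submodule.sup_smul, ann_smul_top_eq_bot', sup_bot_eq]
      rw [hI, ← this]
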